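/- Let n and s be integers with s ≥ 3 and n ≥ 2s + 4, and let F be a stable 3-graph with vertex set [n] that has property U(s, 2s+1), ν(F) ≥ 2, and ν(∂F) ≥ s + 2. Let M = { {i+2, 2s+3−i} : 1 ≤ i ≤ s }. Then for any two distinct e₁, e₂ ∈ M, no 3-element subset of e₁ ∪ e₂ is an edge of F. -/

import Mathlib

open Finset

/-- `F₁ ≺ F₂`: same size, and the `i`-th smallest element of `F₁` is at most
the `i`-th smallest element of `F₂`. -/
def PrecS (A B : Finset ℕ) : Prop :=
  A.card = B.card ∧
    ∀ i, i < A.card → (A.sort (· ≤ ·)).getD i 0 ≤ (B.sort (· ≤ ·)).getD i 0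

/-- A family of subsets of `[n] = {1,…,n}` is stable (shifted). -/
def IsStable (n : ℕ) (F : Finset (Finset ℕ)) : Prop :=
  ∀ A B : Finset ℕ, A ⊆ Finset.Icc 1 n → B ∈ F → PrecS A B → A ∈ F

/-- Property `U(s, q)`: any `s` edges (repetitions allowed) have union of size at most `q`. -/
def HasU (F : Finset (Finset ℕ)) (s q : ℕ) : Prop :=
  ∀ f : Fin s → Finset ℕ, (∀ i, f i ∈ F) → (Finset.univ.biUnion f).card ≤ q

/-- Matching number: the maximum size of a set of pairwise disjoint edges of `F`. -/
def matchNum (F : Finset (Finset ℕ)) : ℕ :=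
  (F.powerset.filter fun M => ∀ a ∈ M, ∀ b ∈ M, a ≠ b → Disjoint a b).sup Finset.card

/-- Shadow of a 3-uniform family: all 2-element subsets of its edges. -/
def shadow2 (F : Finset (Finset ℕ)) : Finset (Finset ℕ) :=
  F.biUnion fun f => f.powersetCard 2

/-- Deletion of the first `i` vertices: edges disjoint from `[i] = {1,…,i}`. -/
def del (F : Finset (Finset ℕ)) (i : ℕ) : Finset (Finset ℕ) :=
  F.filter fun e => Disjoint e (Finset.Icc 1 i)


lemma sort_triple (a b c : ℕ) (h1 : a < b) (h2 : b < c) :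
    ({a, b, c} : Finset ℕ).sort (· ≤ ·) = [a, b, c] := by
  rw [Finset.sort_insert (· ≤ ·) (by simp; omega) (by simp; omega),
      Finset.sort_insert (· ≤ ·) (by simp; omega) (by simp; omega),
      Finset.sort_singleton]

lemma exists_sort3 (g : Finset ℕ) (hg : g.card = 3) :
    ∃ p q r : ℕ, p < q ∧ q < r ∧ g.sort (· ≤ ·) = [p, q, r] ∧
      (∀ x, x ∈ g ↔ x = p ∨ x = q ∨ x = r) := by
  have hlen : (g.sort (· ≤ ·)).length = 3 := by rw [Finset.length_sort]; exact hg
  obtain ⟨p, q, r, hl⟩ := List.length_eq_three.mp hlen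
  have hsorted := Finset.pairwise_sort g (· ≤ ·)
  have hnd := Finset.sort_nodup g (· ≤ ·)
  rw [hl] at hsorted hnd
  simp [List.pairwise_cons] at hsorted
  simp [List.nodup_cons] at hnd
  refine ⟨p, q, r, by omega, by omega, hl, fun x => ?_⟩
  rw [← Finset.mem_sort (· ≤ ·), hl]; simp

lemma stable_contains (n : ℕ) (F : Finset (Finset ℕ))
    (hF : ∀ e ∈ F, e ⊆ Finset.Icc 1 n ∧ e.card = 3)
    (hst : IsStable n F) (g : Finset ℕ) (hg : g ∈ F) (b c : ℕ)
    (h1b : 1 < b) (hbc : b < c) (hcn : c ≤ n)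
    (hx : ∃ x ∈ g, ∃ y ∈ g, x ≠ y ∧ b ≤ x ∧ b ≤ y)
    (hz : ∃ z ∈ g, c ≤ z) :
    ({1, b, c} : Finset ℕ) ∈ F := by
  obtain ⟨p, q, r, hpq, hqr, hsort, hmem⟩ := exists_sort3 g (hF g hg).2
  have hsub := (hF g hg).1
  have hcard : ({1, b, c} : Finset ℕ).card = 3 :=
    Finset.card_eq_three.mpr ⟨1, b, c, by omega, by omega, by omega, rfl⟩
  have hsubn : ({1, b, c} : Finset ℕ) ⊆ Finset.Icc 1 n := by
    intro x hxm
    simp at hxm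
    simp [Finset.mem_Icc]
    omega
  refine hst _ g hsubn hg ?_
  · refine ⟨by rw [hcard, (hF g hg).2], ?_⟩
    intro i hi
    rw [hcard] at hi
    rw [sort_triple 1 b c h1b hbc, hsort]
    have hp1 : 1 ≤ p := by
      have := hsub ((hmem p).mpr (Or.inl rfl)); simp [Finset.mem_Icc] at this; omega
    interval_cases i
    · simpa using hp1
    · obtain ⟨x, hxg, y, hyg, hxy, hbx, hby⟩ := hx
      rw [hmem] at hxg hyg
      simp
      omega
    · obtain ⟨z, hzg, hcz⟩ := hz
      rw [hmem] at hzg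
      simp
      omega

lemma shadow2_mem {F : Finset (Finset ℕ)} {q : Finset ℕ} (h : q ∈ shadow2 F) :
    q.card = 2 ∧ ∃ g ∈ F, q ⊆ g := by
  rw [shadow2, Finset.mem_biUnion] at h
  obtain ⟨g, hg, hq⟩ := h
  rw [Finset.mem_powersetCard] at hq
  exact ⟨hq.2, g, hg, hq.1⟩

lemma key_pair (n s : ℕ) (F : Finset (Finset ℕ))
    (hF : ∀ e ∈ F, e ⊆ Finset.Icc 1 n ∧ e.card = 3)
    (hnus : s + 2 ≤ matchNum (shadow2 F)) (k : ℕ) (hk2 : 1 ≤ k) (hks : k ≤ s + 2) :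
    ∃ g ∈ F, (∃ x ∈ g, ∃ y ∈ g, x ≠ y ∧ k ≤ x ∧ k ≤ y) ∧ (∃ z ∈ g, 2 * s + 5 - k ≤ z) := by
  rw [matchNum] at hnus
  rw [Finset.le_sup_iff (by omega : (0:ℕ) < s + 2)] at hnus
  obtain ⟨M, hM, hMcard⟩ := hnus
  rw [Finset.mem_filter, Finset.mem_powerset] at hM
  obtain ⟨hMsub, hMdisj⟩ := hM
  have hq2 : ∀ q ∈ M, q.card = 2 ∧ q ⊆ Finset.Icc 1 n := by
    intro q hq
    obtain ⟨h2, g, hgF, hqg⟩ := shadow2_mem (hMsub hq)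
    exact ⟨h2, hqg.trans (hF g hgF).1⟩
  set A := M.filter (fun q => ∀ x ∈ q, k ≤ x) with hA
  set bad := M.filter (fun q => ¬ ∀ x ∈ q, k ≤ x) with hbaddef
  set w : Finset ℕ → ℕ := fun q => if h : (q.filter (· < k)).Nonempty
      then (q.filter (· < k)).min' h else 0 with hw
  have hwspec : ∀ q ∈ bad, w q ∈ q ∧ w q < k := by
    intro q hq
    rw [hbaddef, Finset.mem_filter] at hq
    obtain ⟨hqM, hqbad⟩ := hq
    push_neg at hqbad
    obtain ⟨x, hxq, hxk⟩ := hqbad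
    have hne : (q.filter (· < k)).Nonempty := ⟨x, Finset.mem_filter.mpr ⟨hxq, hxk⟩⟩
    have hmin := Finset.mem_filter.mp (Finset.min'_mem _ hne)
    rw [hw]
    simp only [dif_pos hne]
    exact hmin
  have hbad : bad.card ≤ k - 1 := by
    by_contra hcon
    rw [not_le] at hcon
    have hmap : ∀ q ∈ bad, w q ∈ Finset.Icc 1 (k - 1) := by
      intro q hq
      obtain ⟨h1, h2⟩ := hwspec q hq
      have hq' := (Finset.mem_filter.mp hq).1
      have h3 := (hq2 q hq').2 h1
      rw [Finset.mem_Icc] at h3 ⊢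
      omega
    have hcard : (Finset.Icc 1 (k - 1)).card < bad.card := by
      rw [Nat.card_Icc]; omega
    obtain ⟨q, hq, q', hq', hne, heq⟩ :=
      Finset.exists_ne_map_eq_of_card_lt_of_maps_to hcard hmap
    have hd := hMdisj q (Finset.mem_filter.mp hq).1 q' (Finset.mem_filter.mp hq').1 hne
    have h1 := (hwspec q hq).1
    have h2 := (hwspec q' hq').1
    rw [heq] at h1
    exact (Finset.disjoint_left.mp hd h1) h2
  have hAcard : s + 3 - k ≤ A.card := by
    have hsplit : A.card + bad.card = M.card :=
      Finset.card_filter_add_card_filter_not (p := fun q => ∀ x ∈ q, k ≤ x)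
    omega
  have hdisjA : ∀ q ∈ A, ∀ q' ∈ A, q ≠ q' → Disjoint (id q) (id q') := by
    intro q hq q' hq' hne
    exact hMdisj q (Finset.mem_filter.mp hq).1 q' (Finset.mem_filter.mp hq').1 hne
  have hUcard : (A.biUnion id).card = 2 * A.card := by
    rw [Finset.card_biUnion hdisjA]
    have h2 : ∑ q ∈ A, (id q).card = ∑ _q ∈ A, 2 :=
      Finset.sum_congr rfl (fun q hq => (hq2 q (Finset.mem_filter.mp hq).1).1)
    rw [h2, Finset.sum_const, smul_eq_mul, Nat.mul_comm]
  have hbig : ∃ u ∈ A.biUnion id, 2 * s + 5 - k ≤ u := by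
    by_contra hcon
    push_neg at hcon
    have hsub : A.biUnion id ⊆ Finset.Icc k (2 * s + 4 - k) := by
      intro u hu
      rw [Finset.mem_biUnion] at hu
      obtain ⟨q, hq, huq⟩ := hu
      have hk' := (Finset.mem_filter.mp hq).2 u huq
      have hlt := hcon u (Finset.mem_biUnion.mpr ⟨q, hq, huq⟩)
      rw [Finset.mem_Icc]
      omega
    have hle := Finset.card_le_card hsub
    rw [hUcard, Nat.card_Icc] at hle
    omega
  obtain ⟨u, hu, huk⟩ := hbig
  rw [Finset.mem_biUnion] at hu
  obtain ⟨q, hqA, huq⟩ := hu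
  rw [hA, Finset.mem_filter] at hqA
  obtain ⟨hqM, hqk⟩ := hqA
  obtain ⟨h2, g, hgF, hqg⟩ := shadow2_mem (hMsub hqM)
  obtain ⟨x, y, hxy, hq⟩ := Finset.card_eq_two.mp h2
  refine ⟨g, hgF, ⟨x, hqg (by simp [hq]), y, hqg (by simp [hq]), hxy,
    hqk x (by simp [hq]), hqk y (by simp [hq])⟩, ⟨u, hqg (by simpa [hq] using huq), huk⟩⟩

/-- Claim 4 of Lemma 3.2: for distinct e₁, e₂ in the matching
M = {{i+2, 2s+3-i} : 1 ≤ i ≤ s}, no triple inside e₁ ∪ e₂ is an edge of F. -/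
theorem no_triple_in_two_edges (n s : ℕ) (hs : 3 ≤ s) (hn : 2 * s + 4 ≤ n)
    (F : Finset (Finset ℕ))
    (hF : ∀ e ∈ F, e ⊆ Finset.Icc 1 n ∧ e.card = 3)
    (hst : IsStable n F)
    (hU : HasU F s (2 * s + 1))
    (hnu : 2 ≤ matchNum F)
    (hnus : s + 2 ≤ matchNum (shadow2 F)) :
    ∀ e₁ ∈ (Finset.Icc 1 s).image (fun i => ({i + 2, 2 * s + 3 - i} : Finset ℕ)),
      ∀ e₂ ∈ (Finset.Icc 1 s).image (fun i => ({i + 2, 2 * s + 3 - i} : Finset ℕ)),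
        e₁ ≠ e₂ → ∀ f : Finset ℕ, f ⊆ e₁ ∪ e₂ → f.card = 3 → f ∉ F := by
  intro e₁ he₁ e₂ he₂ hne f hfsub hf3 hfF
  obtain ⟨i, hiI, hei⟩ := Finset.mem_image.mp he₁
  obtain ⟨j, hjI, hej⟩ := Finset.mem_image.mp he₂
  rw [Finset.mem_Icc] at hiI hjI
  have hij : i ≠ j := by rintro rfl; exact hne (hei ▸ hej ▸ rfl)
  have hfmem : ∀ x ∈ f, x = i + 2 ∨ x = 2*s+3-i ∨ x = j + 2 ∨ x = 2*s+3-j := by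
    intro x hx
    have hx' := hfsub hx
    rw [← hei, ← hej] at hx'
    simp [Finset.mem_union, Finset.mem_insert, Finset.mem_singleton] at hx'
    tauto
  set K := ((Finset.Icc 2 (s+2)).erase (i+2)).erase (j+2) with hK
  have hKsub : ∀ k ∈ K, 2 ≤ k ∧ k ≤ s + 2 ∧ k ≠ i + 2 ∧ k ≠ j + 2 := by
    intro k hk
    rw [hK, Finset.mem_erase, Finset.mem_erase, Finset.mem_Icc] at hk
    omega
  have hKcard : K.card = s - 1 := by
    rw [hK, Finset.card_erase_of_mem, Finset.card_erase_of_mem, Nat.card_Icc]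
    · omega
    · rw [Finset.mem_Icc]; omega
    · rw [Finset.mem_erase, Finset.mem_Icc]; omega
  have hk_edge : ∀ k ∈ K, ({1, k, 2*s+5-k} : Finset ℕ) ∈ F := by
    intro k hk
    obtain ⟨hk2, hks, _, _⟩ := hKsub k hk
    obtain ⟨g, hgF, hxy, hz⟩ := key_pair n s F hF hnus k (by omega) hks
    exact stable_contains n F hF hst g hgF k (2*s+5-k) (by omega) (by omega) (by omega) hxy hz
  set σ := K.orderIsoOfFin hKcard with hσ
  set E : Fin s → Finset ℕ := fun a => if h : (a : ℕ) < s - 1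
    then {1, ((σ ⟨(a : ℕ), h⟩ : K) : ℕ), 2*s+5-((σ ⟨(a : ℕ), h⟩ : K) : ℕ)} else f with hE
  have hEF : ∀ a, E a ∈ F := by
    intro a
    simp only [hE]
    by_cases h : (a : ℕ) < s - 1
    · rw [dif_pos h]
      exact hk_edge _ (σ ⟨(a : ℕ), h⟩).2
    · rw [dif_neg h]; exact hfF
  have hle := hU E hEF
  set T := insert 1 (f ∪ K.biUnion (fun k => ({k, 2*s+5-k} : Finset ℕ))) with hT
  have hTsub : T ⊆ Finset.univ.biUnion E := by
    intro x hx
    rw [hT] at hx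
    rw [Finset.mem_biUnion]
    rcases Finset.mem_insert.mp hx with rfl | hx'
    · have h0 : ((⟨0, by omega⟩ : Fin s) : ℕ) < s - 1 := by simp; omega
      refine ⟨⟨0, by omega⟩, Finset.mem_univ _, ?_⟩
      simp only [hE]
      rw [dif_pos h0]
      simp
    rcases Finset.mem_union.mp hx' with hxf | hxb
    · have h1 : ¬ ((⟨s-1, by omega⟩ : Fin s) : ℕ) < s - 1 := by simp
      refine ⟨⟨s-1, by omega⟩, Finset.mem_univ _, ?_⟩
      simp only [hE]
      rw [dif_neg h1]
      exact hxf
    · rw [Finset.mem_biUnion] at hxb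
      obtain ⟨k, hkK, hxk⟩ := hxb
      set a := σ.symm ⟨k, hkK⟩ with ha
      have hlt : (a : ℕ) < s - 1 := a.isLt
      refine ⟨⟨(a : ℕ), by omega⟩, Finset.mem_univ _, ?_⟩
      simp only [hE]
      rw [dif_pos hlt]
      have hval : ((σ ⟨(a : ℕ), hlt⟩ : K) : ℕ) = k := by
        rw [show (⟨(a : ℕ), hlt⟩ : Fin (s-1)) = a from rfl, ha, OrderIso.apply_symm_apply]
      rw [hval]
      simp only [Finset.mem_insert, Finset.mem_singleton] at hxk ⊢
      tauto
  have hpairdisj : ∀ k₁ ∈ K, ∀ k₂ ∈ K, k₁ ≠ k₂ →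
      Disjoint ({k₁, 2*s+5-k₁} : Finset ℕ) {k₂, 2*s+5-k₂} := by
    intro k₁ h1 k₂ h2 hne12
    obtain ⟨ha1, hb1, _, _⟩ := hKsub k₁ h1
    obtain ⟨ha2, hb2, _, _⟩ := hKsub k₂ h2
    rw [Finset.disjoint_left]
    intro x hx1 hx2
    simp only [Finset.mem_insert, Finset.mem_singleton] at hx1 hx2
    omega
  have hbU : (K.biUnion (fun k => ({k, 2*s+5-k} : Finset ℕ))).card = 2 * (s-1) := by
    rw [Finset.card_biUnion hpairdisj]
    have hsum : ∑ k ∈ K, ({k, 2*s+5-k} : Finset ℕ).card = ∑ _k ∈ K, 2 :=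
      Finset.sum_congr rfl (fun k hk => by
        obtain ⟨hk2, hks, _, _⟩ := hKsub k hk
        rw [Finset.card_insert_of_notMem (by simp; omega), Finset.card_singleton])
    rw [hsum, Finset.sum_const, smul_eq_mul, hKcard, Nat.mul_comm]
  have hfd : Disjoint f (K.biUnion (fun k => ({k, 2*s+5-k} : Finset ℕ))) := by
    rw [Finset.disjoint_left]
    intro x hxf hxb
    rw [Finset.mem_biUnion] at hxb
    obtain ⟨k, hkK, hxk⟩ := hxb
    obtain ⟨hk2, hks, hki, hkj⟩ := hKsub k hkK
    have hxm := hfmem x hxf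
    simp only [Finset.mem_insert, Finset.mem_singleton] at hxk
    omega
  have h1n : (1:ℕ) ∉ f ∪ K.biUnion (fun k => ({k, 2*s+5-k} : Finset ℕ)) := by
    intro h
    rcases Finset.mem_union.mp h with h | h
    · have := hfmem 1 h; omega
    · rw [Finset.mem_biUnion] at h
      obtain ⟨k, hkK, hxk⟩ := h
      obtain ⟨hk2, hks, _, _⟩ := hKsub k hkK
      simp only [Finset.mem_insert, Finset.mem_singleton] at hxk
      omega
  have hTcard : T.card = 2*s + 2 := by
    rw [hT, Finset.card_insert_of_notMem h1n, Finset.card_union_of_disjoint hfd, hf3, hbU]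
    omega
  have hfin := Finset.card_le_card hTsub
  rw [hTcard] at hfin
  omega
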